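/- Let T > 0, δ ≥ 0, h ≥ 0, p, r > 0, μ̄ > 0 and ρ := rp/(r+p). For t ∈ [0,T] define m_FB(t) := (1/2) μ̄ (δ⁻)² (T−t)² + H_v(−h − ρ δ² (T−t)²) and m_SB(t) := (1/2) μ̄ δ² (T−t)² − (1/2) inf_{z ∈ ℝ} { F₀(h + r z² + p(z − δ(T−t))²) + μ̄ (z⁻ + δ(T−t))² }. Then m_FB(t) = m_SB(t) for every t ∈ [0,T]; in particular ∫_0^T m_FB(t) dt = ∫_0^T m_SB(t) dt, i.e. the informational rent vanishes during off-peak periods. -/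

import Mathlib

noncomputable def phiAux (ε : ℝ) : ℝ → ℝ := fun x =>
  if x ≤ 1 then x else if x < (ε ^ 2)⁻¹ then 2 * Real.sqrt x - 1 else ε * x + ε⁻¹ - 1

lemma phi_le (ε x b : ℝ) (hε0 : 0 < ε) (hε1 : ε < 1) (hx : 0 ≤ x)
    (hb : b ∈ Set.Icc ε 1) : phiAux ε x ≤ 1 / b - 1 + x * b := by
  obtain ⟨hbl, hbu⟩ := hb
  have hb0 : 0 < b := lt_of_lt_of_le hε0 hbl
  have hbinv : b * (1 / b) = 1 := by field_simp
  unfold phiAux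
  split_ifs with h1 h2
  · have hxb : x * b ≤ 1 := by nlinarith
    have key : (1 - b) * (1 - x * b) ≥ 0 := mul_nonneg (by linarith) (by linarith)
    nlinarith [key, hbinv, hb0]
  · have hs2 : Real.sqrt x ^ 2 = x := Real.sq_sqrt hx
    have hs0 : 0 ≤ Real.sqrt x := Real.sqrt_nonneg x
    have key2 : 1 + x * b ^ 2 - 2 * Real.sqrt x * b ≥ 0 := by
      nlinarith [sq_nonneg (Real.sqrt x * b - 1), hs2]
    nlinarith [key2, hbinv, hb0]
  · push_neg at h2
    have hxε : 1 ≤ x * ε ^ 2 := by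
      have := mul_le_mul_of_nonneg_right h2 (le_of_lt (pow_pos hε0 2))
      rwa [inv_mul_cancel₀ (by positivity)] at this
    have key : (b - ε) * (x * b * ε - 1) ≥ 0 := by
      apply mul_nonneg (by linarith)
      nlinarith [mul_le_mul_of_nonneg_right hbl (mul_nonneg hx hε0.le)]
    have hεinv : ε * ε⁻¹ = 1 := by field_simp
    nlinarith [key, hbinv, hεinv, mul_pos hb0 hε0]

lemma phi_exists (ε x : ℝ) (hε0 : 0 < ε) (hε1 : ε < 1) (hx : 0 ≤ x) :
    ∃ b ∈ Set.Icc ε 1, phiAux ε x = 1 / b - 1 + x * b := by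
  unfold phiAux
  split_ifs with h1 h2
  · exact ⟨1, ⟨hε1.le, le_refl 1⟩, by ring⟩
  · push_neg at h1
    have hs2 : Real.sqrt x ^ 2 = x := Real.sq_sqrt hx
    have hs1 : 1 < Real.sqrt x := by
      rw [show (1:ℝ) = Real.sqrt 1 by simp]
      exact Real.sqrt_lt_sqrt (by norm_num) h1
    have hs0 : 0 < Real.sqrt x := by linarith
    have hsu : Real.sqrt x < ε⁻¹ := by
      have : Real.sqrt x < Real.sqrt (ε ^ 2)⁻¹ := Real.sqrt_lt_sqrt hx h2
      rwa [show (ε ^ 2)⁻¹ = (ε⁻¹) ^ 2 by rw [inv_pow], Real.sqrt_sq (by positivity)] at this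
    refine ⟨(Real.sqrt x)⁻¹, ⟨?_, ?_⟩, ?_⟩
    · rw [le_inv_comm₀ hε0 hs0]
      exact hsu.le
    · rw [inv_le_one₀ hs0]
      exact hs1.le
    · rw [one_div, inv_inv]
      have : x * (Real.sqrt x)⁻¹ = Real.sqrt x := by
        rw [← hs2]; field_simp
        rw [Real.sqrt_sq hs0.le]
      rw [this]; ring
  · exact ⟨ε, ⟨le_refl ε, hε1.le⟩, by rw [one_div]; ring⟩

lemma phi_mono (ε x y : ℝ) (hε0 : 0 < ε) (hε1 : ε < 1) (hx : 0 ≤ x) (hxy : x ≤ y) :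
    phiAux ε x ≤ phiAux ε y := by
  obtain ⟨b, hb, hval⟩ := phi_exists ε y hε0 hε1 (hx.trans hxy)
  have h1 := phi_le ε x b hε0 hε1 hx hb
  have hb0 : 0 < b := lt_of_lt_of_le hε0 hb.1
  rw [hval]
  nlinarith [mul_le_mul_of_nonneg_right hxy hb0.le]

noncomputable def F0aux (d : ℕ) (σ lam : Fin d → ℝ) (ε : ℝ) (q : ℝ) : ℝ :=
  ∑ j, (σ j) ^ 2 / lam j * phiAux ε (lam j * q)

lemma F0_mono (d : ℕ) (σ lam : Fin d → ℝ) (hσ : ∀ j, 0 < σ j) (hlam : ∀ j, 0 < lam j)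
    (ε : ℝ) (hε0 : 0 < ε) (hε1 : ε < 1) (x y : ℝ) (hx : 0 ≤ x) (hxy : x ≤ y) :
    F0aux d σ lam ε x ≤ F0aux d σ lam ε y := by
  apply Finset.sum_le_sum
  intro j _
  apply mul_le_mul_of_nonneg_left _ (div_pos (pow_pos (hσ j) 2) (hlam j)).le
  exact phi_mono ε _ _ hε0 hε1 (mul_nonneg (hlam j).le hx)
    (mul_le_mul_of_nonneg_left hxy (hlam j).le)

lemma inf_quad (d : ℕ) (σ lam : Fin d → ℝ) (hσ : ∀ j, 0 < σ j) (hlam : ∀ j, 0 < lam j)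
    (ε : ℝ) (hε0 : 0 < ε) (hε1 : ε < 1) (q : ℝ) (hq : 0 ≤ q) :
    IsLeast ((fun b => (∑ j, (σ j) ^ 2 / lam j * (1 / b j - 1)) + q * ∑ j, (σ j) ^ 2 * b j)
        '' {b : Fin d → ℝ | ∀ j, b j ∈ Set.Icc ε 1})
      (F0aux d σ lam ε q) := by
  constructor
  · have hex : ∀ j, ∃ b ∈ Set.Icc ε 1,
        phiAux ε (lam j * q) = 1 / b - 1 + (lam j * q) * b :=
      fun j => phi_exists ε _ hε0 hε1 (mul_nonneg (hlam j).le hq)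
    choose bstar hbstar hval using hex
    refine ⟨bstar, hbstar, ?_⟩
    unfold F0aux
    dsimp only
    rw [Finset.mul_sum, ← Finset.sum_add_distrib]
    apply Finset.sum_congr rfl
    intro j _
    rw [hval j]
    have hl := (hlam j).ne'
    field_simp
  · rintro y ⟨b, hb, rfl⟩
    unfold F0aux
    dsimp only
    rw [Finset.mul_sum, ← Finset.sum_add_distrib]
    apply Finset.sum_le_sum
    intro j _
    have h1 := phi_le ε (lam j * q) (b j) hε0 hε1 (mul_nonneg (hlam j).le hq) (hb j)
    have h2 := mul_le_mul_of_nonneg_left h1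
      (le_of_lt (div_pos (pow_pos (hσ j) 2) (hlam j)))
    calc (σ j) ^ 2 / lam j * phiAux ε (lam j * q)
        ≤ (σ j) ^ 2 / lam j * (1 / b j - 1 + lam j * q * b j) := h2
      _ = (σ j) ^ 2 / lam j * (1 / b j - 1) + q * ((σ j) ^ 2 * b j) := by
          have hl := (hlam j).ne'
          field_simp

lemma inf_z (d : ℕ) (σ lam : Fin d → ℝ) (hσ : ∀ j, 0 < σ j) (hlam : ∀ j, 0 < lam j)
    (ε : ℝ) (hε0 : 0 < ε) (hε1 : ε < 1)
    (h p r μbar a : ℝ) (hh : 0 ≤ h) (hp : 0 < p) (hr : 0 < r) (hμ : 0 < μbar) (ha : 0 ≤ a) :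
    IsLeast (Set.range fun z : ℝ =>
        F0aux d σ lam ε (h + r * z ^ 2 + p * (z - a) ^ 2) + μbar * (max (-z) 0 + a) ^ 2)
      (F0aux d σ lam ε (h + r * p / (r + p) * a ^ 2) + μbar * a ^ 2) := by
  have hrp : 0 < r + p := by linarith
  constructor
  · refine ⟨p * a / (r + p), ?_⟩
    have hz0 : 0 ≤ p * a / (r + p) := by positivity
    have hmax : max (-(p * a / (r + p))) 0 = 0 := max_eq_right (by linarith)
    dsimp only
    rw [hmax, zero_add]
    congr 2
    field_simp
    ring
  · rintro y ⟨z, rfl⟩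
    have hq1 : h + r * p / (r + p) * a ^ 2 ≤ h + r * z ^ 2 + p * (z - a) ^ 2 := by
      have : r * p / (r + p) * a ^ 2 ≤ r * z ^ 2 + p * (z - a) ^ 2 := by
        rw [div_mul_eq_mul_div, div_le_iff₀ hrp]
        nlinarith [sq_nonneg ((r + p) * z - p * a)]
      linarith
    have hq0 : 0 ≤ h + r * p / (r + p) * a ^ 2 := by
      have : 0 ≤ r * p / (r + p) * a ^ 2 := by positivity
      linarith
    have hF := F0_mono d σ lam hσ hlam ε hε0 hε1 _ _ hq0 hq1
    have hm : 0 ≤ max (-z) 0 := le_max_right _ _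
    have : μbar * a ^ 2 ≤ μbar * (max (-z) 0 + a) ^ 2 := by
      nlinarith [mul_nonneg hμ.le (mul_nonneg hm ha), mul_nonneg hμ.le (sq_nonneg (max (-z) 0))]
    linarith
/-- During off-peak periods (`δ ≥ 0`) the first-best and second-best time
densities coincide, `m_FB(t) = m_SB(t)` for `t ∈ [0,T]`, hence the informational rent
vanishes: `∫_0^T m_FB = ∫_0^T m_SB`. -/
theorem no_information_rent_offpeak
    (d : ℕ) (hd : 1 ≤ d) (σ lam : Fin d → ℝ)
    (hσ : ∀ j, 0 < σ j) (hlam : ∀ j, 0 < lam j)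
    (ε : ℝ) (hε : ε ∈ Set.Ioo (0 : ℝ) 1)
    (B : Set (Fin d → ℝ)) (hB : B = {b | ∀ j, b j ∈ Set.Icc ε 1})
    (c₂ : (Fin d → ℝ) → ℝ)
    (hc₂ : c₂ = fun b => ∑ j, (σ j) ^ 2 / lam j * (1 / b j - 1))
    (σsq : (Fin d → ℝ) → ℝ) (hσsq : σsq = fun b => ∑ j, (σ j) ^ 2 * b j)
    (Hv : ℝ → ℝ)
    (hHv : Hv = fun γ => -(1 / 2) * sInf ((fun b => c₂ b - γ * σsq b) '' B))
    (φ : ℝ → ℝ)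
    (hφ : φ = fun x =>
      if x ≤ 1 then x else if x < (ε ^ 2)⁻¹ then 2 * Real.sqrt x - 1 else ε * x + ε⁻¹ - 1)
    (F₀ : ℝ → ℝ) (hF₀ : F₀ = fun q => ∑ j, (σ j) ^ 2 / lam j * φ (lam j * q))
    (T δ h p r μbar ρ : ℝ) (hT : 0 < T) (hδ : 0 ≤ δ) (hh : 0 ≤ h)
    (hp : 0 < p) (hr : 0 < r) (hμbar : 0 < μbar) (hρ : ρ = r * p / (r + p))
    (mFB : ℝ → ℝ)
    (hmFB : mFB = fun t =>
      (1 / 2) * μbar * (max (-δ) 0) ^ 2 * (T - t) ^ 2 + Hv (-h - ρ * δ ^ 2 * (T - t) ^ 2))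
    (mSB : ℝ → ℝ)
    (hmSB : mSB = fun t =>
      (1 / 2) * μbar * δ ^ 2 * (T - t) ^ 2 -
        (1 / 2) * sInf (Set.range fun z : ℝ =>
          F₀ (h + r * z ^ 2 + p * (z - δ * (T - t)) ^ 2) +
            μbar * (max (-z) 0 + δ * (T - t)) ^ 2)) :
    (∀ t ∈ Set.Icc (0 : ℝ) T, mFB t = mSB t) ∧
      (∫ t in (0 : ℝ)..T, mFB t) = ∫ t in (0 : ℝ)..T, mSB t := by
  obtain ⟨hε0, hε1⟩ := hε
  have hF : F₀ = F0aux d σ lam ε := by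
    rw [hF₀, hφ]; rfl
  have key : ∀ t ∈ Set.Icc (0 : ℝ) T, mFB t = mSB t := by
    intro t ht
    obtain ⟨ht0, htT⟩ := ht
    have hTt : 0 ≤ T - t := by linarith
    have hrp : 0 < r + p := by linarith
    set a := δ * (T - t) with ha_def
    have ha : 0 ≤ a := mul_nonneg hδ hTt
    have ha2 : a ^ 2 = δ ^ 2 * (T - t) ^ 2 := by rw [ha_def]; ring
    have hq0 : 0 ≤ h + r * p / (r + p) * a ^ 2 := by
      have : 0 ≤ r * p / (r + p) * a ^ 2 := by positivity
      linarith
    have hB1 : sInf ((fun b => c₂ b - (-h - ρ * δ ^ 2 * (T - t) ^ 2) * σsq b) '' B)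
        = F0aux d σ lam ε (h + r * p / (r + p) * a ^ 2) := by
      have heq : (fun b => c₂ b - (-h - ρ * δ ^ 2 * (T - t) ^ 2) * σsq b)
          = fun b => (∑ j, (σ j) ^ 2 / lam j * (1 / b j - 1))
              + (h + r * p / (r + p) * a ^ 2) * ∑ j, (σ j) ^ 2 * b j := by
        funext b
        rw [hc₂, hσsq, hρ, ha2]; ring
      rw [heq, hB]
      exact (inf_quad d σ lam hσ hlam ε hε0 hε1 _ hq0).csInf_eq
    have hB2 : sInf (Set.range fun z : ℝ =>
          F₀ (h + r * z ^ 2 + p * (z - a) ^ 2) + μbar * (max (-z) 0 + a) ^ 2)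
        = F0aux d σ lam ε (h + r * p / (r + p) * a ^ 2) + μbar * a ^ 2 := by
      rw [hF]
      exact (inf_z d σ lam hσ hlam ε hε0 hε1 h p r μbar a hh hp hr hμbar ha).csInf_eq
    have hmax : max (-δ) 0 = 0 := max_eq_right (by linarith)
    rw [hmFB, hmSB, hHv]
    dsimp only
    rw [hB1, hB2, hmax]
    linear_combination ((1 : ℝ) / 2) * μbar * ha2
  refine ⟨key, intervalIntegral.integral_congr ?_⟩
  intro t ht
  rw [Set.uIcc_of_le hT.le] at ht
  exact key t ht
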